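/- Let λ > 0, μ ≥ 1, and y ≥ 1. Define SC(t) for agents: μλ at position 0, (μ+1)(λ/2) at position 0, and (μ+1)(λ/2) at position 1. Then SC(0) = (μ+1)λ/2 and SC(y) = μλy + (μ+1)(λ/2)y + (μ+1)(λ/2)(y − 1) ≥ (3μ+1)λ/2, so SC(y)/SC(0) ≥ (3μ+1)/(μ+1), which tends to 3 as μ → ∞. -/
import Mathlib


theorem stmt_18 (lam y : ℝ) (hlam : 0 < lam) (hy : y ≥ 1)
    (μ : ℕ) (hμ : 1 ≤ μ)
    (SC : ℝ → ℝ)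
    (hSC : ∀ t, SC t = (μ : ℝ) * lam * |t - 0|
      + ((μ : ℝ) + 1) * (lam / 2) * |t - 0|
      + ((μ : ℝ) + 1) * (lam / 2) * |t - 1|) :
    SC 0 = ((μ : ℝ) + 1) * lam / 2 ∧
    SC y = (μ : ℝ) * lam * y + ((μ : ℝ) + 1) * (lam / 2) * y
      + ((μ : ℝ) + 1) * (lam / 2) * (y - 1) ∧
    SC y ≥ (3 * (μ : ℝ) + 1) * lam / 2 ∧
    SC y / SC 0 ≥ (3 * (μ : ℝ) + 1) / ((μ : ℝ) + 1) ∧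
    Filter.Tendsto (fun m : ℕ => (3 * (m : ℝ) + 1) / ((m : ℝ) + 1))
      Filter.atTop (nhds 3) := by
  have hμ1 : (1 : ℝ) ≤ (μ : ℝ) := by exact_mod_cast hμ
  have hy0 : (0:ℝ) ≤ y := by linarith
  have h0 : SC 0 = ((μ : ℝ) + 1) * lam / 2 := by
    rw [hSC]
    simp [abs_of_nonpos]
    ring
  have hyval : SC y = (μ : ℝ) * lam * y + ((μ : ℝ) + 1) * (lam / 2) * y
      + ((μ : ℝ) + 1) * (lam / 2) * (y - 1) := by
    rw [hSC]
    rw [abs_of_nonneg (by linarith : (0:ℝ) ≤ y - 0), abs_of_nonneg (by linarith : (0:ℝ) ≤ y - 1)]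
    ring
  have hge : SC y ≥ (3 * (μ : ℝ) + 1) * lam / 2 := by
    rw [hyval]; nlinarith [mul_nonneg (mul_nonneg (by linarith : (0:ℝ) ≤ 2*(μ:ℝ)+1) hlam.le) (by linarith : (0:ℝ) ≤ y-1)]
  refine ⟨h0, hyval, hge, ?_, ?_⟩
  · rw [h0]
    rw [ge_iff_le, div_le_div_iff₀ (by positivity) (by positivity)]
    nlinarith
  · have : (fun m : ℕ => (3 * (m : ℝ) + 1) / ((m : ℝ) + 1))
        = fun m : ℕ => 3 - 2 / ((m : ℝ) + 1) := by
      funext m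
      have : ((m:ℝ) + 1) ≠ 0 := by positivity
      field_simp
      ring
    rw [this]
    have h2 : Filter.Tendsto (fun m : ℕ => 2 / ((m : ℝ) + 1)) Filter.atTop (nhds 0) := by
      apply Filter.Tendsto.div_atTop tendsto_const_nhds
      exact Filter.tendsto_atTop_add_const_right _ 1 tendsto_natCast_atTop_atTop
    have := (tendsto_const_nhds (x := (3:ℝ)) (f := Filter.atTop (α := ℕ))).sub h2
    simpa using this
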